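/- Let β, r, θ, c > 0 be real parameters and h ∈ {1,2}. A point (u,v) with u > 0 and v > 0 is a fixed point of the map V_h (i.e. V_h(u,v) = (u,v)) if and only if v = 1 - u (so in particular 0 < u < 1) and θ = (β u - r)(1 + c u^h)/u^h. -/

import Mathlib

/-- The discrete-time phytoplankton–zooplankton map
`V_h(u,v) = (u(2-u) - u v, β u v + (1-r) v - θ u^h v/(1 + c u^h))`. -/
noncomputable def Vh (β r θ c : ℝ) (h : ℕ) (p : ℝ × ℝ) : ℝ × ℝ :=
  (p.1 * (2 - p.1) - p.1 * p.2,
   β * p.1 * p.2 + (1 - r) * p.2 - θ * p.1 ^ h * p.2 / (1 + c * p.1 ^ h))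

/-- A point `(u,v)` with `u > 0`, `v > 0` is a fixed point of `V_h` iff `v = 1 - u`
(so in particular `0 < u < 1`) and `θ = (β u - r)(1 + c u^h)/u^h`. -/
theorem positive_fixed_point_iff (β r θ c : ℝ) (hβ : 0 < β) (hr : 0 < r)
    (hθ : 0 < θ) (hc : 0 < c) (h : ℕ) (hh : h = 1 ∨ h = 2)
    (u v : ℝ) (hu : 0 < u) (hv : 0 < v) :
    Vh β r θ c h (u, v) = (u, v) ↔
      v = 1 - u ∧ 0 < u ∧ u < 1 ∧
        θ = (β * u - r) * (1 + c * u ^ h) / u ^ h := by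
  have huh : (0:ℝ) < u ^ h := pow_pos hu h
  have hD : (0:ℝ) < 1 + c * u ^ h := by positivity
  have hDne : (1 + c * u ^ h) ≠ 0 := ne_of_gt hD
  have huhne : (u:ℝ) ^ h ≠ 0 := ne_of_gt huh
  simp only [Vh, Prod.mk.injEq]
  constructor
  · rintro ⟨h1, h2⟩
    have hv1 : v = 1 - u := by
      have : u * (1 - u - v) = 0 := by linarith [h1]
      rcases mul_eq_zero.mp this with h' | h'
      · exact absurd h' (ne_of_gt hu)
      · linarith
    have hu1 : u < 1 := by nlinarith
    refine ⟨hv1, hu, hu1, ?_⟩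
    have h2' : v * (β * u - r - θ * u ^ h / (1 + c * u ^ h)) = 0 := by
      field_simp at h2 ⊢
      linear_combination v * h2
    have h3 : β * u - r - θ * u ^ h / (1 + c * u ^ h) = 0 := by
      rcases mul_eq_zero.mp h2' with h' | h'
      · exact absurd h' (ne_of_gt hv)
      · exact h'
    field_simp at h3 ⊢
    linarith [h3]
  · rintro ⟨hv1, _, hu1, hθeq⟩
    constructor
    · subst hv1; ring
    · subst hθeq hv1
      field_simp
      ring
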